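/- Let d ≥ 1, let Δ ⊆ ℝ^d be a reflexive polytope, and let Δ = Δ_1 + … + Δ_r be a nef partition: each Δ_i is a lattice polytope containing 0, and Δ_i ∩ Δ_j = {0} for i ≠ j. For each i let E_i be the set of extreme points e of Δ* with min_{x ∈ Δ_i} ⟨x, e⟩ = -1, and let ∇_i be the convex hull of E_i ∪ {0}. Then for each j, ∇_j = {y ∈ ℝ^d : ⟨x, y⟩ ≥ -1 for all x ∈ Δ_j, and ⟨x, y⟩ ≥ 0 for all x ∈ Δ_i with i ≠ j}; that is, ∇_j is maximal among sets satisfying the pairing inequalities ⟨Δ_i, ∇_j⟩ ≥ -δ_{ij}. -/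

import Mathlib

open Pointwise

/-- The standard inner product on `ℝ^d`. -/
def dotp {d : ℕ} (x y : Fin d → ℝ) : ℝ := ∑ i, x i * y i

/-- A point of `ℝ^d` with integer coordinates (a lattice point of `ℤ^d`). -/
def IsLatticePt {d : ℕ} (x : Fin d → ℝ) : Prop := ∀ i, ∃ n : ℤ, x i = (n : ℝ)

/-- A lattice polytope: the convex hull of a finite set of lattice points. -/
def IsLatticePolytope {d : ℕ} (P : Set (Fin d → ℝ)) : Prop :=
  ∃ S : Finset (Fin d → ℝ), (∀ x ∈ S, IsLatticePt x) ∧ P = convexHull ℝ (S : Set (Fin d → ℝ))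

/-- The dual set `A* = {x : ⟨y,x⟩ ≥ -1 ∀ y ∈ A}`. -/
def dualSet {d : ℕ} (A : Set (Fin d → ℝ)) : Set (Fin d → ℝ) :=
  {x | ∀ y ∈ A, -1 ≤ dotp y x}

/-- A reflexive polytope: a lattice polytope with `0` in its interior whose dual is
also a lattice polytope. -/
def IsReflexivePolytope {d : ℕ} (P : Set (Fin d → ℝ)) : Prop :=
  IsLatticePolytope P ∧ (0 : Fin d → ℝ) ∈ interior P ∧ IsLatticePolytope (dualSet P)

/-- The minimum (infimum) of `⟨x, z⟩` over `x ∈ A`. -/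
noncomputable def minDot {d : ℕ} (A : Set (Fin d → ℝ)) (z : Fin d → ℝ) : ℝ :=
  sInf ((fun x => dotp x z) '' A)

section Aux

variable {d : ℕ}

lemma dotp_comm (x y : Fin d → ℝ) : dotp x y = dotp y x := by
  simp [dotp, mul_comm]

lemma dotp_add_left (x y z : Fin d → ℝ) : dotp (x + y) z = dotp x z + dotp y z := by
  simp [dotp, add_mul, Finset.sum_add_distrib]

lemma dotp_smul_left (c : ℝ) (x z : Fin d → ℝ) : dotp (c • x) z = c * dotp x z := by
  simp [dotp, Finset.mul_sum, mul_assoc]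

lemma dotp_zero_left (z : Fin d → ℝ) : dotp 0 z = 0 := by simp [dotp]

lemma dotp_zero_right (z : Fin d → ℝ) : dotp z 0 = 0 := by simp [dotp]

lemma dotp_smul_right (c : ℝ) (x z : Fin d → ℝ) : dotp x (c • z) = c * dotp x z := by
  rw [dotp_comm, dotp_smul_left, dotp_comm]

lemma dotp_sum_left {ι : Type*} (s : Finset ι) (f : ι → Fin d → ℝ) (z : Fin d → ℝ) :
    dotp (∑ i ∈ s, f i) z = ∑ i ∈ s, dotp (f i) z := by
  simp only [dotp, Finset.sum_apply, Finset.sum_mul]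
  exact Finset.sum_comm

lemma dotp_sum_right {ι : Type*} (s : Finset ι) (f : ι → Fin d → ℝ) (z : Fin d → ℝ) :
    dotp z (∑ i ∈ s, f i) = ∑ i ∈ s, dotp z (f i) := by
  rw [dotp_comm, dotp_sum_left]
  simp [dotp_comm]

lemma continuous_dotp (z : Fin d → ℝ) : Continuous fun x : Fin d → ℝ => dotp x z :=
  continuous_finset_sum _ fun i _ => (continuous_apply i).mul continuous_const

lemma dotp_self_pos {y : Fin d → ℝ} (hy : y ≠ 0) : 0 < dotp y y := by
  obtain ⟨i, hi⟩ : ∃ i, y i ≠ 0 := by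
    by_contra h; push_neg at h; exact hy (funext h)
  exact Finset.sum_pos' (fun k _ => mul_self_nonneg _)
    ⟨i, Finset.mem_univ i, mul_self_pos.mpr hi⟩

lemma minDot_spec {A : Set (Fin d → ℝ)} (hA : IsCompact A) (hne : A.Nonempty) (z : Fin d → ℝ) :
    (∃ x ∈ A, dotp x z = minDot A z) ∧ ∀ x ∈ A, minDot A z ≤ dotp x z := by
  obtain ⟨x, hxA, hx⟩ := hA.exists_isMinOn hne (continuous_dotp z).continuousOn
  have hL : IsLeast ((fun x => dotp x z) '' A) (dotp x z) :=
    ⟨⟨x, hxA, rfl⟩, by rintro _ ⟨w, hw, rfl⟩; exact isMinOn_iff.mp hx w hw⟩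
  have hmd : minDot A z = dotp x z := hL.csInf_eq
  exact ⟨⟨x, hxA, hmd.symm⟩, fun w hw => hmd ▸ isMinOn_iff.mp hx w hw⟩

end Aux

/-- maximality of the `∇_j`: `∇_j` equals the set of all `y` satisfying
the pairing inequalities `⟨Δ_i, y⟩ ≥ -δ_{ij}` (Remark 3.3). -/
theorem nabla_eq_maximal_set {d r : ℕ} (hd : 1 ≤ d)
    (Δ : Set (Fin d → ℝ)) (hΔ : IsReflexivePolytope Δ)
    (D : Fin r → Set (Fin d → ℝ)) (hlat : ∀ i, IsLatticePolytope (D i))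
    (h0 : ∀ i, (0 : Fin d → ℝ) ∈ D i) (hsum : Δ = ∑ i, D i)
    (hnef : ∀ i j, i ≠ j → D i ∩ D j = {0})
    (E : Fin r → Set (Fin d → ℝ))
    (hE : ∀ i, E i = {e ∈ Set.extremePoints ℝ (dualSet Δ) | minDot (D i) e = -1})
    (N : Fin r → Set (Fin d → ℝ))
    (hN : ∀ i, N i = convexHull ℝ (E i ∪ {0})) :
    ∀ j, N j = {y : Fin d → ℝ |
      (∀ x ∈ D j, -1 ≤ dotp x y) ∧ ∀ i, i ≠ j → ∀ x ∈ D i, 0 ≤ dotp x y} := by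
  classical
  obtain ⟨⟨SΔ, -, hSΔ⟩, h0int, ⟨S', hS'lat, hS'⟩⟩ := hΔ
  have hΔcomp : IsCompact Δ := hSΔ ▸ (SΔ.finite_toSet.isCompact_convexHull ℝ)
  have h0Δ : (0 : Fin d → ℝ) ∈ Δ := interior_subset h0int
  have hKcomp : IsCompact (dualSet Δ) := hS' ▸ (S'.finite_toSet.isCompact_convexHull ℝ)
  have hKconv : Convex ℝ (dualSet Δ) := hS' ▸ convex_convexHull ℝ _
  have hDcomp : ∀ i, IsCompact (D i) := fun i => by
    obtain ⟨S, -, hS⟩ := hlat i; exact hS ▸ (S.finite_toSet.isCompact_convexHull ℝ)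
  have hDne : ∀ i, (D i).Nonempty := fun i => ⟨0, h0 i⟩
  have hDsub : ∀ i, D i ⊆ Δ := by
    intro i x hx
    rw [hsum, Set.mem_fintype_sum]
    refine ⟨fun k => if k = i then x else 0, fun k => ?_, by simp⟩
    by_cases h : k = i
    · subst h; simp [hx]
    · simp [h, h0 k]
  have hmex : ∀ i z, ∃ x ∈ D i, dotp x z = minDot (D i) z :=
    fun i z => (minDot_spec (hDcomp i) (hDne i) z).1
  have hmle : ∀ i z, ∀ x ∈ D i, minDot (D i) z ≤ dotp x z :=
    fun i z => (minDot_spec (hDcomp i) (hDne i) z).2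
  have hm0 : ∀ i z, minDot (D i) z ≤ 0 := fun i z => by
    simpa [dotp_zero_left] using hmle i z 0 (h0 i)
  have hmsum : ∀ z ∈ dualSet Δ, -1 ≤ ∑ i, minDot (D i) z := by
    intro z hz
    choose x hx hval using fun i => hmex i z
    have hmem : (∑ i, x i) ∈ Δ := by
      rw [hsum, Set.mem_fintype_sum]; exact ⟨x, hx, rfl⟩
    calc (-1 : ℝ) ≤ dotp (∑ i, x i) z := hz _ hmem
      _ = ∑ i, dotp (x i) z := dotp_sum_left _ _ _
      _ = ∑ i, minDot (D i) z := Finset.sum_congr rfl fun i _ => hval i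
  have hclass : ∀ e ∈ dualSet Δ, ∀ i', minDot (D i') e = -1 →
      ∀ i, i ≠ i' → minDot (D i) e = 0 := by
    intro e he i' hi' i hne
    have hsum' := hmsum e he
    rw [← Finset.add_sum_erase _ _ (Finset.mem_univ i'), hi'] at hsum'
    have h1 : 0 ≤ ∑ k ∈ Finset.univ.erase i', minDot (D k) e := by linarith
    have h2 : ∑ k ∈ Finset.univ.erase i', minDot (D k) e ≤ 0 :=
      Finset.sum_nonpos fun k _ => hm0 k e
    exact (Finset.sum_eq_zero_iff_of_nonpos fun k _ => hm0 k e).mp (le_antisymm h2 h1) i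
      (Finset.mem_erase.mpr ⟨hne, Finset.mem_univ i⟩)
  intro j
  have hNj : N j = convexHull ℝ (E j ∪ {0}) := hN j
  apply Set.Subset.antisymm
  · rw [hNj]
    apply convexHull_min
    · intro e he
      rcases he with he | he
      · rw [hE j] at he
        obtain ⟨heK, hmin⟩ := he
        have heK' : e ∈ dualSet Δ := extremePoints_subset heK
        refine ⟨fun x hx => heK' x (hDsub j hx), fun i hij x hx => ?_⟩
        calc (0 : ℝ) = minDot (D i) e := (hclass e heK' j hmin i hij).symm
          _ ≤ dotp x e := hmle i e x hx
      · rw [Set.mem_singleton_iff] at he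
        subst he
        exact ⟨fun x _ => by rw [dotp_zero_right]; norm_num,
          fun i _ x _ => by rw [dotp_zero_right]⟩
    · rintro y1 hy1 y2 hy2 a b ha hb hab
      have hcombo : ∀ x : Fin d → ℝ, dotp x (a • y1 + b • y2) = a * dotp x y1 + b * dotp x y2 := by
        intro x
        rw [dotp_comm, dotp_add_left, dotp_smul_left, dotp_smul_left, dotp_comm y1 x,
          dotp_comm y2 x]
      constructor
      · intro x hx
        rw [hcombo]
        have h1 := mul_le_mul_of_nonneg_left (hy1.1 x hx) ha
        have h2 := mul_le_mul_of_nonneg_left (hy2.1 x hx) hb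
        nlinarith
      · intro i hij x hx
        rw [hcombo]
        have h1 := mul_nonneg ha (hy1.2 i hij x hx)
        have h2 := mul_nonneg hb (hy2.2 i hij x hx)
        linarith
  · intro y hy
    obtain ⟨hy1, hy2⟩ := hy
    have hyK : y ∈ dualSet Δ := by
      intro x hx
      rw [hsum, Set.mem_fintype_sum] at hx
      obtain ⟨g, hg, rfl⟩ := hx
      rw [dotp_sum_left, ← Finset.add_sum_erase _ _ (Finset.mem_univ j)]
      have h1 : -1 ≤ dotp (g j) y := hy1 _ (hg j)
      have h2 : 0 ≤ ∑ k ∈ Finset.univ.erase j, dotp (g k) y :=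
        Finset.sum_nonneg fun k hk => hy2 k (Finset.mem_erase.mp hk).1 _ (hg k)
      linarith
    by_cases hy0 : y = 0
    · rw [hNj]
      exact subset_convexHull ℝ _ (Or.inr (by simp [hy0]))
    obtain ⟨⟨x₀, hx₀Δ, hx₀val⟩, hΔle⟩ := minDot_spec hΔcomp ⟨0, h0Δ⟩ y
    set m := minDot Δ y with hm
    have hm1 : -1 ≤ m := hx₀val ▸ hyK x₀ hx₀Δ
    have hmle0 : m ≤ 0 := by simpa [dotp_zero_left] using hΔle 0 h0Δ
    have hmneg : m < 0 := by
      rcases lt_or_ge m 0 with h | h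
      · exact h
      · exfalso
        apply hy0
        exfalso
        obtain ⟨ε, hε, hsub⟩ := Metric.mem_nhds_iff.mp (mem_interior_iff_mem_nhds.mp h0int)
        have hynorm : 0 < ‖y‖ := norm_pos_iff.mpr hy0
        set c := ε / (2 * ‖y‖) with hc
        have hcpos : 0 < c := by positivity
        have hmem : (-c) • y ∈ Δ := by
          apply hsub
          rw [Metric.mem_ball, dist_zero_right, norm_smul]
          have hnc : ‖(-c : ℝ)‖ = c := by
            rw [norm_neg, Real.norm_eq_abs, abs_of_pos hcpos]
          have hval : c * ‖y‖ = ε / 2 := by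
            rw [hc]; field_simp
          rw [hnc, hval]
          linarith
        have hge : (0 : ℝ) ≤ dotp ((-c) • y) y := le_trans h (hΔle _ hmem)
        rw [dotp_smul_left] at hge
        nlinarith [dotp_self_pos hy0]
    set t := -1 / m with ht
    have htpos : 0 < t := div_pos_iff.mpr (Or.inr ⟨by norm_num, hmneg⟩)
    have htm : t * m = -1 := div_mul_cancel₀ (-1) hmneg.ne
    have ht1 : 1 ≤ t := by
      rw [ht, le_div_iff_of_neg hmneg]; linarith
    set y' := t • y with hy'
    have hy'K : y' ∈ dualSet Δ := by
      intro x hx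
      rw [hy', dotp_smul_right]
      calc (-1 : ℝ) = t * m := htm.symm
        _ ≤ t * dotp x y := mul_le_mul_of_nonneg_left (hΔle x hx) htpos.le
    have hx₀y' : dotp x₀ y' = -1 := by
      rw [hy', dotp_smul_right, hx₀val]; exact htm
    have hy2' : ∀ i, i ≠ j → ∀ x ∈ D i, 0 ≤ dotp x y' := fun i hij x hx => by
      rw [hy', dotp_smul_right]
      exact mul_nonneg htpos.le (hy2 i hij x hx)
    have hx₀' : x₀ ∈ ∑ i, D i := by rw [← hsum]; exact hx₀Δ
    obtain ⟨g, hg, hgsum⟩ := (Set.mem_fintype_sum _ _).mp hx₀'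
    have hgy' : dotp (g j) y' = -1 ∧ ∀ i, i ≠ j → dotp (g i) y' = 0 := by
      have hsplit : dotp (g j) y' + ∑ k ∈ Finset.univ.erase j, dotp (g k) y' = -1 := by
        rw [Finset.add_sum_erase _ (fun k => dotp (g k) y') (Finset.mem_univ j), ← dotp_sum_left, hgsum, hx₀y']
      have hterms : ∀ k ∈ Finset.univ.erase j, 0 ≤ dotp (g k) y' :=
        fun k hk => hy2' k (Finset.mem_erase.mp hk).1 _ (hg k)
      have hjge : -1 ≤ dotp (g j) y' := hy'K _ (hDsub j (hg j))
      have hsum0 : ∑ k ∈ Finset.univ.erase j, dotp (g k) y' = 0 := by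
        have := Finset.sum_nonneg hterms; linarith
      exact ⟨by linarith, fun i hij =>
        (Finset.sum_eq_zero_iff_of_nonneg hterms).mp hsum0 i
          (Finset.mem_erase.mpr ⟨hij, Finset.mem_univ i⟩)⟩
    have hextS : Set.extremePoints ℝ (dualSet Δ) ⊆ ↑S' := by
      rw [hS']; exact extremePoints_convexHull_subset
    have hfin : (Set.extremePoints ℝ (dualSet Δ)).Finite := S'.finite_toSet.subset hextS
    have hKeq : dualSet Δ = convexHull ℝ (Set.extremePoints ℝ (dualSet Δ)) := by
      have hclosed : IsClosed (convexHull ℝ (Set.extremePoints ℝ (dualSet Δ))) :=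
        hfin.isClosed_convexHull ℝ
      have hkm := closure_convexHull_extremePoints hKcomp hKconv
      rw [hclosed.closure_eq] at hkm
      exact hkm.symm
    set T := hfin.toFinset with hT
    have hy'T : y' ∈ convexHull ℝ (↑T : Set (Fin d → ℝ)) := by
      rw [hfin.coe_toFinset, ← hKeq]; exact hy'K
    rw [Finset.convexHull_eq] at hy'T
    obtain ⟨w, hw0, hw1, hwc⟩ := hy'T
    have hwrep : ∑ e ∈ T, w e • e = y' := by
      rw [← hwc, Finset.centerMass_eq_of_sum_1 _ _ hw1]
      simp
    have hTe : ∀ e ∈ T, e ∈ Set.extremePoints ℝ (dualSet Δ) :=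
      fun e he => hfin.mem_toFinset.mp he
    have hTK : ∀ e ∈ T, e ∈ dualSet Δ := fun e he => extremePoints_subset (hTe e he)
    have hTge : ∀ e ∈ T, -1 ≤ dotp x₀ e := fun e he => hTK e he x₀ hx₀Δ
    have hsupp : ∀ e ∈ T, w e ≠ 0 → dotp x₀ e = -1 := by
      have hxy : ∑ e ∈ T, w e * dotp x₀ e = -1 := by
        rw [← hx₀y', ← hwrep, dotp_sum_right]
        exact Finset.sum_congr rfl fun e _ => (dotp_smul_right (w e) x₀ e).symm
      have hterms : ∀ e ∈ T, 0 ≤ w e * (dotp x₀ e + 1) := fun e he =>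
        mul_nonneg (hw0 e he) (by linarith [hTge e he])
      have hzero : ∑ e ∈ T, w e * (dotp x₀ e + 1) = 0 := by
        have hexp : ∑ e ∈ T, w e * (dotp x₀ e + 1)
            = (∑ e ∈ T, w e * dotp x₀ e) + ∑ e ∈ T, w e := by
          rw [← Finset.sum_add_distrib]
          exact Finset.sum_congr rfl fun e _ => by ring
        rw [hexp, hxy, hw1]; ring
      intro e he hwe
      have h := (Finset.sum_eq_zero_iff_of_nonneg hterms).mp hzero e he
      rcases mul_eq_zero.mp h with h' | h'
      · exact absurd h' hwe
      · linarith
    have hkey : ∀ e ∈ T, w e ≠ 0 → ∀ i, dotp (g i) e = minDot (D i) e := by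
      intro e he hwe
      have h1 : ∑ i, dotp (g i) e = -1 := by
        rw [← dotp_sum_left, hgsum, hsupp e he hwe]
      have h2 : -1 ≤ ∑ i, minDot (D i) e := hmsum e (hTK e he)
      have hterms : ∀ i ∈ Finset.univ, 0 ≤ dotp (g i) e - minDot (D i) e :=
        fun i _ => sub_nonneg.mpr (hmle i e _ (hg i))
      have hdval : ∑ i, (dotp (g i) e - minDot (D i) e)
          = -1 - ∑ i, minDot (D i) e := by
        rw [Finset.sum_sub_distrib, h1]
      have hdiff : ∑ i, (dotp (g i) e - minDot (D i) e) = 0 := by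
        have hnn := Finset.sum_nonneg hterms
        linarith
      intro i
      have := (Finset.sum_eq_zero_iff_of_nonneg hterms).mp hdiff i (Finset.mem_univ i)
      linarith
    have hsupp0 : ∀ i, i ≠ j → ∀ e ∈ T, w e ≠ 0 → minDot (D i) e = 0 := by
      intro i hij
      have hzero : ∑ e ∈ T, w e * dotp (g i) e = 0 := by
        rw [← hgy'.2 i hij, ← hwrep, dotp_sum_right]
        exact Finset.sum_congr rfl fun e _ => (dotp_smul_right (w e) (g i) e).symm
      have hterms : ∀ e ∈ T, w e * dotp (g i) e ≤ 0 := by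
        intro e he
        by_cases hwe : w e = 0
        · simp [hwe]
        · rw [hkey e he hwe i]
          exact mul_nonpos_iff.mpr (Or.inl ⟨hw0 e he, hm0 i e⟩)
      intro e he hwe
      have h := (Finset.sum_eq_zero_iff_of_nonpos hterms).mp hzero e he
      rcases mul_eq_zero.mp h with h' | h'
      · exact absurd h' hwe
      · rw [← hkey e he hwe i]; exact h'
    have hsuppj : ∀ e ∈ T, w e ≠ 0 → e ∈ E j := by
      intro e he hwe
      have hsume : ∑ i, minDot (D i) e = -1 := by
        rw [← Finset.sum_congr rfl fun i _ => (hkey e he hwe i), ← dotp_sum_left, hgsum,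
          hsupp e he hwe]
      have hmj : minDot (D j) e = -1 := by
        rw [← Finset.add_sum_erase _ _ (Finset.mem_univ j)] at hsume
        have hz : ∑ k ∈ Finset.univ.erase j, minDot (D k) e = 0 :=
          Finset.sum_eq_zero fun k hk => hsupp0 k (Finset.mem_erase.mp hk).1 e he hwe
        linarith
      rw [hE j]
      exact ⟨hTe e he, hmj⟩
    have hy'mem : y' ∈ convexHull ℝ (E j ∪ {0} : Set (Fin d → ℝ)) := by
      rw [← hwc, ← Finset.centerMass_filter_ne_zero]
      apply Finset.centerMass_mem_convexHull
      · intro e he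
        exact hw0 e (Finset.mem_filter.mp he).1
      · rw [Finset.sum_filter_ne_zero, hw1]; norm_num
      · intro e he
        obtain ⟨heT, hwe⟩ := Finset.mem_filter.mp he
        exact Or.inl (hsuppj e heT hwe)
    rw [hNj]
    have h0mem : (0 : Fin d → ℝ) ∈ convexHull ℝ (E j ∪ {0} : Set (Fin d → ℝ)) :=
      subset_convexHull ℝ _ (Or.inr rfl)
    have htinv0 : 0 ≤ t⁻¹ := inv_nonneg.mpr htpos.le
    have htinv1 : t⁻¹ ≤ 1 := inv_le_one_of_one_le₀ ht1
    have hcomb : y = (1 - t⁻¹) • (0 : Fin d → ℝ) + t⁻¹ • y' := by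
      rw [hy', smul_smul, inv_mul_cancel₀ htpos.ne', one_smul, smul_zero, zero_add]
    rw [hcomb]
    exact (convex_convexHull ℝ _) h0mem hy'mem (by linarith) htinv0 (by ring)
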